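/- For b > 0 and z ≥ 0, the function q ↦ (C_{q+z}/C_q)·exp(z/b) is monotonically nonincreasing in q on {q ∈ [l,u] : q+z ≤ u}; equivalently its partial derivative with respect to q is ≤ 0. -/

import Mathlib

open Real

/-- Normalisation constant of the bounded Laplace mechanism on `[l,u]`. -/
noncomputable def C (l u b q : ℝ) : ℝ :=
  1 - (1 / 2) * (Real.exp (-(q - l) / b) + Real.exp (-(u - q) / b))

lemma key_ineq (a1 a2 c1 c2 s : ℝ) (ha2 : 0 < a2) (ha12 : a2 ≤ a1) (ha1 : a1 ≤ 1)
    (hc1 : 0 < c1) (hc12 : c1 ≤ c2) (hc2 : c2 ≤ 1) (hs : 0 < s) (hs1 : s ≤ 1)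
    (hP : a1 * c1 = a2 * c2) :
    (1 - (1/2) * (a2*s + c2)) * (1 - (1/2) * (a1 + c1*s)) ≤
      (1 - (1/2) * (a1*s + c1)) * (1 - (1/2) * (a2 + c2*s)) := by
  have h1s : (0:ℝ) ≤ 1 - s := by linarith
  have ha1s : a1 * s ≤ 1 := by nlinarith
  have ha2s : a2 * s ≤ 1 := by nlinarith
  have hc11 : c1 ≤ 1 := le_trans hc12 hc2
  have ha2' : 0 ≤ a1 - a2 := by linarith
  have t1 : 0 ≤ (1 - s) * ((a1 - a2) * (a1 * a2) * (1 - c2)) :=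
    mul_nonneg h1s (mul_nonneg (mul_nonneg ha2' (mul_nonneg (by linarith) ha2.le)) (by linarith))
  have t2 : 0 ≤ (1 - s) * ((a1 - a2) * (a1 * a2) * (1 - c1)) :=
    mul_nonneg h1s (mul_nonneg (mul_nonneg ha2' (mul_nonneg (by linarith) ha2.le)) (by linarith))
  have t3 : 0 ≤ (1 - s) * ((a1 - a2) * (a2 * c2) * (1 - a1*s)) :=
    mul_nonneg h1s (mul_nonneg (mul_nonneg ha2' (mul_nonneg ha2.le (by linarith))) (by linarith))
  have t4 : 0 ≤ (1 - s) * ((a1 - a2) * (a1 * c1) * (1 - a2*s)) :=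
    mul_nonneg h1s (mul_nonneg (mul_nonneg ha2' (mul_nonneg (by linarith) hc1.le)) (by linarith))
  have key : a1 * a2 * (4 * ((1 - (1/2) * (a1*s + c1)) * (1 - (1/2) * (a2 + c2*s))
      - (1 - (1/2) * (a2*s + c2)) * (1 - (1/2) * (a1 + c1*s)))) =
      (1 - s) * ((a1 - a2) * (a1 * a2) * (1 - c2))
      + (1 - s) * ((a1 - a2) * (a1 * a2) * (1 - c1))
      + (1 - s) * ((a1 - a2) * (a2 * c2) * (1 - a1*s))
      + (1 - s) * ((a1 - a2) * (a1 * c1) * (1 - a2*s))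
      := by linear_combination ((1 - s) * (a1*a2*(1+s) - a1 - a2)) * hP
  nlinarith [key, mul_pos (lt_of_lt_of_le ha2 ha12) ha2]

lemma C_pos (l u b q : ℝ) (hlu : l < u) (hb : 0 < b) (hq : q ∈ Set.Icc l u) :
    0 < C l u b q := by
  obtain ⟨h1, h2⟩ := hq
  have e1 : Real.exp (-(q - l) / b) ≤ 1 := by
    apply Real.exp_le_one_iff.mpr
    apply div_nonpos_of_nonpos_of_nonneg <;> linarith
  have e2 : Real.exp (-(u - q) / b) ≤ 1 := by
    apply Real.exp_le_one_iff.mpr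
    apply div_nonpos_of_nonpos_of_nonneg <;> linarith
  have e3 : Real.exp (-(q - l) / b) * Real.exp (-(u - q) / b) < 1 := by
    rw [← Real.exp_add]
    apply Real.exp_lt_one_iff.mpr
    rw [← add_div]
    apply div_neg_of_neg_of_pos _ hb
    linarith
  have p1 := Real.exp_pos (-(q - l) / b)
  have p2 := Real.exp_pos (-(u - q) / b)
  unfold C
  nlinarith [mul_nonneg (sub_nonneg.2 e1) (sub_nonneg.2 e2)]

theorem antitone_in_q (l u b z : ℝ) (hlu : l < u) (hb : 0 < b) (hz : 0 ≤ z) :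
    AntitoneOn (fun q => (C l u b (q + z) / C l u b q) * Real.exp (z / b))
      {q : ℝ | q ∈ Set.Icc l u ∧ q + z ≤ u} := by
  intro q1 hq1 q2 hq2 h12
  obtain ⟨⟨hl1, hu1⟩, hz1⟩ := hq1
  obtain ⟨⟨hl2, hu2⟩, hz2⟩ := hq2
  simp only
  apply mul_le_mul_of_nonneg_right _ (Real.exp_pos _).le
  rw [div_le_div_iff₀ (C_pos l u b q2 hlu hb ⟨hl2, hu2⟩) (C_pos l u b q1 hlu hb ⟨hl1, hu1⟩)]
  set a1 := Real.exp (-(q1 - l) / b) with ha1d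
  set a2 := Real.exp (-(q2 - l) / b) with ha2d
  set c1 := Real.exp (-(u - q1 - z) / b) with hc1d
  set c2 := Real.exp (-(u - q2 - z) / b) with hc2d
  set s := Real.exp (-z / b) with hsd
  have hC1 : C l u b q1 = 1 - (1/2) * (a1 + c1 * s) := by
    unfold C
    rw [ha1d, hc1d, hsd, ← Real.exp_add]
    ring_nf
  have hC2 : C l u b q2 = 1 - (1/2) * (a2 + c2 * s) := by
    unfold C
    rw [ha2d, hc2d, hsd, ← Real.exp_add]
    ring_nf
  have hC1' : C l u b (q1 + z) = 1 - (1/2) * (a1 * s + c1) := by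
    unfold C
    rw [ha1d, hc1d, hsd, ← Real.exp_add]
    ring_nf
  have hC2' : C l u b (q2 + z) = 1 - (1/2) * (a2 * s + c2) := by
    unfold C
    rw [ha2d, hc2d, hsd, ← Real.exp_add]
    ring_nf
  rw [hC1, hC2, hC1', hC2']
  apply key_ineq
  · exact Real.exp_pos _
  · apply Real.exp_le_exp.mpr
    apply (div_le_div_iff_of_pos_right hb).mpr
    linarith
  · apply Real.exp_le_one_iff.mpr
    apply div_nonpos_of_nonpos_of_nonneg <;> linarith
  · exact Real.exp_pos _
  · apply Real.exp_le_exp.mpr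
    apply (div_le_div_iff_of_pos_right hb).mpr
    linarith
  · apply Real.exp_le_one_iff.mpr
    apply div_nonpos_of_nonpos_of_nonneg <;> linarith
  · exact Real.exp_pos _
  · apply Real.exp_le_one_iff.mpr
    apply div_nonpos_of_nonpos_of_nonneg <;> linarith
  · rw [← Real.exp_add, ← Real.exp_add]
    congr 1
    field_simp
    ring
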